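/- The number of permutations of length n avoiding both 123 and 132 and containing the pattern 231 exactly once is 1 for all n ≥ 3, and 0 for n < 3 (generating function x³/(1−x)). -/

import Mathlib

/-- An occurrence of the pattern `τ` (of length `k`) in the permutation `π` (of length `n`)
is a strictly increasing map of positions along which `π` is order-isomorphic to `τ`. -/
def IsOcc {k n : ℕ} (τ : Fin k → Fin k) (π : Fin n → Fin n) (f : Fin k → Fin n) : Prop :=
  StrictMono f ∧ ∀ i j : Fin k, τ i < τ j ↔ π (f i) < π (f j)

/-- `π` avoids the pattern `τ`. -/
def Avoids {k n : ℕ} (τ : Fin k → Fin k) (π : Fin n → Fin n) : Prop :=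
  ¬ ∃ f, IsOcc τ π f

/-- `π` contains exactly one occurrence of the pattern `τ`. -/
def ContainsOnce {k n : ℕ} (τ : Fin k → Fin k) (π : Fin n → Fin n) : Prop :=
  ∃! f, IsOcc τ π f

def p123 : Fin 3 → Fin 3 := ![0, 1, 2]
def p132 : Fin 3 → Fin 3 := ![0, 2, 1]
def p213 : Fin 3 → Fin 3 := ![1, 0, 2]
def p231 : Fin 3 → Fin 3 := ![1, 2, 0]
def p312 : Fin 3 → Fin 3 := ![2, 0, 1]
def p321 : Fin 3 → Fin 3 := ![2, 1, 0]

set_option maxHeartbeats 1000000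

section Aux

variable {n : ℕ}

lemma matval (i j k : Fin n) : ![i,j,k] 0 = i ∧ ![i,j,k] 1 = j ∧ ![i,j,k] 2 = k := by
  refine ⟨rfl, rfl, rfl⟩

lemma isOcc231_iff (π : Fin n → Fin n) (f : Fin 3 → Fin n) :
    IsOcc p231 π f ↔ (f 0 < f 1 ∧ f 1 < f 2) ∧ π (f 0) < π (f 1) ∧ π (f 2) < π (f 0) := by
  constructor
  · rintro ⟨hm, hp⟩
    exact ⟨⟨hm (by decide), hm (by decide)⟩, (hp 0 1).mp (by decide), (hp 2 0).mp (by decide)⟩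
  · rintro ⟨⟨h01, h12⟩, hv1, hv2⟩
    have hv3 : π (f 2) < π (f 1) := hv2.trans hv1
    constructor
    · intro a b hab
      fin_cases a <;> fin_cases b <;>
        first
          | exact absurd hab (by decide)
          | exact h01
          | exact h12
          | exact h01.trans h12
    · intro i j
      fin_cases i <;> fin_cases j <;>
        first
          | exact iff_of_true (by decide) hv1
          | exact iff_of_true (by decide) hv2
          | exact iff_of_true (by decide) hv3
          | exact iff_of_false (by decide) (lt_irrefl _)
          | exact iff_of_false (by decide) (lt_asymm hv1)
          | exact iff_of_false (by decide) (lt_asymm hv2)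
          | exact iff_of_false (by decide) (lt_asymm hv3)

lemma ex_occ123 (π : Fin n → Fin n) {i j k : Fin n} (hij : i < j) (hjk : j < k)
    (h1 : π i < π j) (h2 : π j < π k) : ∃ f, IsOcc p123 π f := by
  refine ⟨![i,j,k], ?_, ?_⟩
  · intro a b hab
    fin_cases a <;> fin_cases b <;>
      first
        | exact absurd hab (by decide)
        | exact hij
        | exact hjk
        | exact hij.trans hjk
  · have h3 : π i < π k := h1.trans h2
    intro a b
    fin_cases a <;> fin_cases b <;>
      first
        | exact iff_of_true (by decide) h1
        | exact iff_of_true (by decide) h2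
        | exact iff_of_true (by decide) h3
        | exact iff_of_false (by decide) (lt_irrefl _)
        | exact iff_of_false (by decide) (lt_asymm h1)
        | exact iff_of_false (by decide) (lt_asymm h2)
        | exact iff_of_false (by decide) (lt_asymm h3)

lemma ex_occ132 (π : Fin n → Fin n) {i j k : Fin n} (hij : i < j) (hjk : j < k)
    (h1 : π i < π k) (h2 : π k < π j) : ∃ f, IsOcc p132 π f := by
  refine ⟨![i,j,k], ?_, ?_⟩
  · intro a b hab
    fin_cases a <;> fin_cases b <;>
      first
        | exact absurd hab (by decide)
        | exact hij
        | exact hjk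
        | exact hij.trans hjk
  · have h3 : π i < π j := h1.trans h2
    intro a b
    fin_cases a <;> fin_cases b <;>
      first
        | exact iff_of_true (by decide) h1
        | exact iff_of_true (by decide) h2
        | exact iff_of_true (by decide) h3
        | exact iff_of_false (by decide) (lt_irrefl _)
        | exact iff_of_false (by decide) (lt_asymm h1)
        | exact iff_of_false (by decide) (lt_asymm h2)
        | exact iff_of_false (by decide) (lt_asymm h3)

lemma AV_of (π : Fin n → Fin n) (hb : Function.Bijective π)
    (h1 : Avoids p123 π) (h2 : Avoids p132 π) :
    ∀ i j k : Fin n, i < j → j < k → π i < π j → π k < π i := by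
  intro i j k hij hjk hv
  rcases lt_trichotomy (π k) (π i) with h | h | h
  · exact h
  · exact absurd (hb.1 h) (hij.trans hjk).ne'
  · rcases lt_trichotomy (π j) (π k) with h' | h' | h'
    · exact absurd (ex_occ123 π hij hjk hv h') h1
    · exact absurd (hb.1 h') hjk.ne
    · exact absurd (ex_occ132 π hij hjk h h') h2

lemma avoids_of (π : Fin n → Fin n)
    (h : ∀ i j k : Fin n, i < j → j < k → π i < π j → ¬ π i < π k) :
    Avoids p123 π ∧ Avoids p132 π := by
  constructor
  · rintro ⟨f, hm, hp⟩
    exact h (f 0) (f 1) (f 2) (hm (by decide)) (hm (by decide))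
      ((hp 0 1).mp (by decide)) ((hp 0 2).mp (by decide))
  · rintro ⟨f, hm, hp⟩
    exact h (f 0) (f 1) (f 2) (hm (by decide)) (hm (by decide))
      ((hp 0 1).mp (by decide)) ((hp 0 2).mp (by decide))

/-- rank function: position `x` holds the `kfun n x`-th largest value in the target perm. -/
def kfun (n x : ℕ) : ℕ :=
  if x + 3 < n then x else if x + 3 = n then n - 2 else if x + 2 = n then n - 3 else n - 1

lemma kfun_lt {x : ℕ} (hx : x < n) : kfun n x < n := by unfold kfun; split_ifs <;> omega

def sig (n : ℕ) : Fin n → Fin n := fun a => ⟨(n - 1 - kfun n a) % n, Nat.mod_lt _ a.pos⟩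

lemma sig_val (a : Fin n) : (sig n a : ℕ) = n - 1 - kfun n a := by
  have := a.pos
  exact Nat.mod_eq_of_lt (by omega)

lemma sig_lt_iff (a b : Fin n) : sig n a < sig n b ↔ kfun n (b : ℕ) < kfun n (a : ℕ) := by
  have ha := kfun_lt a.isLt
  have hb := kfun_lt b.isLt
  rw [Fin.lt_def, sig_val, sig_val]
  omega

lemma sig_bij (hn : 3 ≤ n) : Function.Bijective (sig n) := by
  rw [← Finite.injective_iff_bijective]
  intro a b h
  have h' := congrArg Fin.val h
  rw [sig_val, sig_val] at h'
  have ha := kfun_lt a.isLt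
  have hb := kfun_lt b.isLt
  have hk : kfun n (a : ℕ) = kfun n (b : ℕ) := by omega
  have ha2 := a.isLt
  have hb2 := b.isLt
  unfold kfun at hk
  refine Fin.ext ?_
  split_ifs at hk <;> omega

lemma sig_triple (hn : 3 ≤ n) :
    ∀ i j k : Fin n, i < j → j < k → sig n i < sig n j → ¬ sig n i < sig n k := by
  intro i j k hij hjk h1 h2
  rw [sig_lt_iff] at h1 h2
  rw [Fin.lt_def] at hij hjk
  have hk2 := k.isLt
  unfold kfun at h1 h2
  split_ifs at h1 h2 <;> omega

lemma sig_containsOnce (hn : 3 ≤ n) : ContainsOnce p231 (sig n) := by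
  have h3 : n - 3 < n := by omega
  have h2 : n - 2 < n := by omega
  have h1 : n - 1 < n := by omega
  set a : Fin n := ⟨n - 3, h3⟩ with ha
  set b : Fin n := ⟨n - 2, h2⟩ with hb
  set c : Fin n := ⟨n - 1, h1⟩ with hc
  have key : ∀ g : Fin 3 → Fin n, IsOcc p231 (sig n) g → g = ![a, b, c] := by
    intro g hg
    rw [isOcc231_iff] at hg
    obtain ⟨⟨h01, h12⟩, hv1, hv2⟩ := hg
    rw [sig_lt_iff] at hv1 hv2
    rw [Fin.lt_def] at h01 h12
    have e2 := (g 2).isLt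
    have q : (g 0 : ℕ) = n - 3 ∧ (g 1 : ℕ) = n - 2 ∧ (g 2 : ℕ) = n - 1 := by
      unfold kfun at hv1 hv2; split_ifs at hv1 hv2 <;> omega
    obtain ⟨q0, q1, q2⟩ := q
    funext t
    fin_cases t
    · exact Fin.ext q0
    · exact Fin.ext q1
    · exact Fin.ext q2
  refine ⟨![a, b, c], ?_, key⟩
  show IsOcc p231 (sig n) ![a, b, c]
  rw [isOcc231_iff]
  have m := matval a b c
  rw [m.1, m.2.1, m.2.2]
  refine ⟨⟨by rw [Fin.lt_def]; show n - 3 < n - 2; omega, by rw [Fin.lt_def]; show n - 2 < n - 1; omega⟩, ?_, ?_⟩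
  · rw [sig_lt_iff]
    show kfun n (n-2) < kfun n (n-3)
    unfold kfun; split_ifs <;> omega
  · rw [sig_lt_iff]
    show kfun n (n-3) < kfun n (n-1)
    unfold kfun; split_ifs <;> omega

lemma pi_eq_sig (hn : 3 ≤ n) (π : Fin n → Fin n) (hb : Function.Bijective π)
    (h1 : Avoids p123 π) (h2 : Avoids p132 π) (hc : ContainsOnce p231 π) : π = sig n := by
  have AV := AV_of π hb h1 h2
  obtain ⟨f, hfo, huniq⟩ := hc
  rw [isOcc231_iff] at hfo
  obtain ⟨⟨hf01, hf12⟩, hfv1, hfv2⟩ := hfo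
  -- any occurrence triple equals (f 0, f 1, f 2)
  have HU : ∀ i j k : Fin n, i < j → j < k → π i < π j → π k < π i →
      i = f 0 ∧ j = f 1 ∧ k = f 2 := by
    intro i j k hij hjk hv1 hv2
    have m := matval i j k
    have heq : ![i,j,k] = f := by
      refine huniq ![i,j,k] ?_
      show IsOcc p231 π ![i,j,k]
      rw [isOcc231_iff, m.1, m.2.1, m.2.2]
      exact ⟨⟨hij, hjk⟩, hv1, hv2⟩
    refine ⟨?_, ?_, ?_⟩
    · rw [← heq, m.1]
    · rw [← heq, m.2.1]
    · rw [← heq, m.2.2]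
  -- Step A : π is decreasing on positions `≤ n-3`
  have D : ∀ i j : Fin n, i < j → (j : ℕ) + 3 ≤ n → π j < π i := by
    intro i j hij hj
    by_contra h
    push_neg at h
    have hv : π i < π j := lt_of_le_of_ne h (fun e => hij.ne (hb.1 e))
    have hB : n - 2 < n := by omega
    have hC : n - 1 < n := by omega
    have hjb : j < (⟨n - 2, hB⟩ : Fin n) := by rw [Fin.lt_def]; simp; omega
    have hjc : j < (⟨n - 1, hC⟩ : Fin n) := by rw [Fin.lt_def]; simp; omega
    have o1 := HU i j ⟨n - 2, hB⟩ hij hjb hv (AV i j _ hij hjb hv)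
    have o2 := HU i j ⟨n - 1, hC⟩ hij hjc hv (AV i j _ hij hjc hv)
    have : ((⟨n - 2, hB⟩ : Fin n) : ℕ) = ((⟨n - 1, hC⟩ : Fin n) : ℕ) := by
      rw [o1.2.2, o2.2.2]
    simp at this
    omega
  -- locate f
  have hq1 : (f 1 : ℕ) = n - 2 ∧ (f 2 : ℕ) = n - 1 := by
    have hne : ¬ ((f 1 : ℕ) + 3 ≤ n) := by
      intro h
      exact lt_asymm hfv1 (D (f 0) (f 1) hf01 h)
    have e2 := (f 2).isLt
    have h12' := Fin.lt_def.mp hf12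
    constructor <;> omega
  have hq0 : (f 0 : ℕ) = n - 3 := by
    by_contra h
    have h01' := Fin.lt_def.mp hf01
    have hlt : (f 0 : ℕ) + 3 < n := by omega
    have hA : n - 3 < n := by omega
    set a : Fin n := ⟨n - 3, hA⟩ with haa
    have hfa : f 0 < a := by rw [Fin.lt_def]; show (f 0 : ℕ) < n - 3; omega
    have hab : a < f 1 := by rw [Fin.lt_def]; show n - 3 < (f 1 : ℕ); omega
    have hva : π a < π (f 0) := D (f 0) a hfa (by simp [haa]; omega)
    have hva1 : π a < π (f 1) := hva.trans hfv1
    have o := HU a (f 1) (f 2) hab hf12 hva1 (AV a (f 1) (f 2) hab hf12 hva1)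
    have : a = f 0 := o.1
    rw [← this] at hfa
    exact lt_irrefl _ hfa
  -- F3
  have F3 : ∀ i : Fin n, (i : ℕ) + 3 < n → π (f 1) < π i := by
    intro i hi
    by_contra h
    push_neg at h
    have hne : i ≠ f 1 := by
      intro e
      rw [e] at hi
      omega
    have hv : π i < π (f 1) := lt_of_le_of_ne h (fun e => hne (hb.1 e))
    have hif : i < f 1 := by rw [Fin.lt_def]; omega
    have o := HU i (f 1) (f 2) hif hf12 hv (AV i (f 1) (f 2) hif hf12 hv)
    have : (i : ℕ) = n - 3 := by rw [o.1, hq0]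
    omega
  -- Step E
  have E : ∀ a b : Fin n, kfun n (b : ℕ) < kfun n (a : ℕ) → π a < π b := by
    intro a b hk
    have ha2 := a.isLt
    have hb2 := b.isLt
    by_cases pa : (a : ℕ) + 3 < n
    · have pb : (b : ℕ) + 3 < n ∧ (b : ℕ) < (a : ℕ) := by
        unfold kfun at hk; split_ifs at hk <;> omega
      exact D b a (Fin.lt_def.mpr pb.2) (by omega)
    · by_cases pa2 : (a : ℕ) + 3 = n
      · have haf : a = f 0 := Fin.ext (by omega)
        by_cases pb : (b : ℕ) + 3 < n
        · exact D b a (Fin.lt_def.mpr (by omega)) (by omega)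
        · have hb' : (b : ℕ) + 2 = n := by
            unfold kfun at hk; split_ifs at hk <;> omega
          have hbf : b = f 1 := Fin.ext (by omega)
          rw [haf, hbf]; exact hfv1
      · by_cases pa3 : (a : ℕ) + 2 = n
        · have haf : a = f 1 := Fin.ext (by omega)
          have pb : (b : ℕ) + 3 < n := by
            unfold kfun at hk; split_ifs at hk <;> omega
          rw [haf]; exact F3 b pb
        · have haf : a = f 2 := Fin.ext (by omega)
          by_cases pb : (b : ℕ) + 3 < n
          · have hstep := D b (f 0) (Fin.lt_def.mpr (by omega)) (by omega)
            rw [haf]; exact hfv2.trans hstep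
          · by_cases pb2 : (b : ℕ) + 3 = n
            · rw [haf, show b = f 0 from Fin.ext (by omega)]; exact hfv2
            · have hb' : (b : ℕ) + 2 = n := by
                unfold kfun at hk; split_ifs at hk <;> omega
              rw [haf, show b = f 1 from Fin.ext (by omega)]
              exact hfv2.trans hfv1
  have IFF : ∀ a b : Fin n, sig n a < sig n b → π a < π b := by
    intro a b h
    rw [sig_lt_iff] at h
    exact E a b h
  -- conclude π = sig
  let e := Equiv.ofBijective (sig n) (sig_bij hn)
  have hmono : StrictMono (fun x => π (e.symm x)) := by
    intro x y hxy
    refine IFF _ _ ?_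
    have hx : sig n (e.symm x) = x := e.apply_symm_apply x
    have hy : sig n (e.symm y) = y := e.apply_symm_apply y
    rw [hx, hy]
    exact hxy
  have hsurj : Function.Surjective (fun x => π (e.symm x)) := hb.2.comp e.symm.surjective
  have hid : (fun x => π (e.symm x)) = id := by
    refine (hmono.range_inj strictMono_id).mp ?_
    rw [Set.range_eq_univ.mpr hsurj, Set.range_id]
  funext x
  have := congrFun hid (e x)
  simp only [e.symm_apply_apply, id] at this
  exact this

end Aux

/-- `|Sₙ(123,132; 231)| = 1` for `n ≥ 3` and `0` for `n < 3`. -/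
theorem stmt4 (n : ℕ) :
    Nat.card {π : Fin n → Fin n // Function.Bijective π ∧
      Avoids p123 π ∧ Avoids p132 π ∧ ContainsOnce p231 π} =
      if 3 ≤ n then 1 else 0 := by
  split_ifs with hn
  · rw [Nat.card_eq_one_iff_unique]
    refine ⟨⟨fun x y => ?_⟩, ?_⟩
    · obtain ⟨π, hb, h1, h2, hc⟩ := x
      obtain ⟨π', hb', h1', h2', hc'⟩ := y
      refine Subtype.ext ?_
      show π = π'
      rw [pi_eq_sig hn π hb h1 h2 hc, pi_eq_sig hn π' hb' h1' h2' hc']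
    · have hav := avoids_of (sig n) (fun i j k hij hjk h1 h2 => sig_triple hn i j k hij hjk h1 h2)
      exact ⟨⟨sig n, sig_bij hn, hav.1, hav.2, sig_containsOnce hn⟩⟩
  · have : IsEmpty {π : Fin n → Fin n // Function.Bijective π ∧
        Avoids p123 π ∧ Avoids p132 π ∧ ContainsOnce p231 π} := by
      refine ⟨fun x => ?_⟩
      obtain ⟨π, _, _, _, hc⟩ := x
      obtain ⟨f, hf, -⟩ := hc
      have h01 := Fin.lt_def.mp (hf.1 (show (0 : Fin 3) < 1 by decide))
      have h12 := Fin.lt_def.mp (hf.1 (show (1 : Fin 3) < 2 by decide))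
      have := (f 2).isLt
      omega
    exact Nat.card_of_isEmpty
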